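/- Let I ⊂ ℝ be a finite interval with |I| = 1 and k : I × I → ℝ measurable with 0 < k₀ ≤ k(ξ,η) ≤ k₁. Let μ ∈ ℂ with |μ| ≥ 1 and let φ : I → ℂ be bounded measurable with μ φ(ξ) = ∫_I (k(ξ,η)/k̄(ξ)) φ(η) dη for all ξ ∈ I, where k̄(ξ) = ∫_I k(ξ,η) dη. If φ is not almost everywhere zero, then |φ(ξ)| = sup_I |φ| for almost every ξ ∈ I. -/

import Mathlib

open MeasureTheory

theorem stmt1 (I : Set ℝ) (hI : MeasurableSet I) (hvol : volume I = 1)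
    (k : ℝ → ℝ → ℝ) (k₀ k₁ : ℝ) (hk₀ : 0 < k₀) (hk01 : k₀ < k₁)
    (hmeas : Measurable (Function.uncurry k))
    (hbound : ∀ ξ ∈ I, ∀ η ∈ I, k₀ ≤ k ξ η ∧ k ξ η ≤ k₁)
    (μ : ℂ) (hμ : 1 ≤ ‖μ‖)
    (φ : ℝ → ℂ) (hφm : Measurable φ)
    (C : ℝ) (hφb : ∀ ξ ∈ I, ‖φ ξ‖ ≤ C)
    (heig : ∀ ξ ∈ I,
      μ * φ ξ = ∫ η in I, (↑(k ξ η / ∫ η' in I, k ξ η') : ℂ) * φ η)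
    (hnz : ¬ (∀ᵐ ξ ∂(volume.restrict I), φ ξ = 0)) :
    ∀ᵐ ξ ∂(volume.restrict I),
      ‖φ ξ‖ = sSup ((fun ξ => ‖φ ξ‖) '' I) := by
  have hvollt : volume I < ⊤ := by rw [hvol]; exact ENNReal.one_lt_top
  have hIne : I.Nonempty := by
    rw [Set.nonempty_iff_ne_empty]
    intro h; rw [h] at hvol; simp at hvol
  obtain ⟨ξ₀, hξ₀⟩ := hIne
  set M := sSup ((fun ξ => ‖φ ξ‖) '' I) with hM
  have hbdd : BddAbove ((fun ξ => ‖φ ξ‖) '' I) := by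
    refine ⟨C, ?_⟩; rintro x ⟨ξ, hξ, rfl⟩; exact hφb ξ hξ
  have hle : ∀ ξ ∈ I, ‖φ ξ‖ ≤ M :=
    fun ξ hξ => le_csSup hbdd ⟨ξ, hξ, rfl⟩
  -- generic integrability
  have hint : ∀ (f : ℝ → ℝ), Measurable f → ∀ B : ℝ, (∀ x ∈ I, |f x| ≤ B) →
      IntegrableOn f I volume := by
    intro f hf B hB
    refine Integrable.mono' (g := fun _ => B) (integrableOn_const hvollt.ne)
      hf.aestronglyMeasurable (ae_restrict_of_forall_mem hI ?_)
    intro x hx; simpa using hB x hx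
  have hkmeas : ∀ ξ, Measurable (k ξ) := fun ξ =>
    hmeas.comp (measurable_prodMk_left)
  have hkint : ∀ ξ ∈ I, IntegrableOn (k ξ) I volume := by
    intro ξ hξ
    refine hint _ (hkmeas ξ) k₁ fun η hη => ?_
    have := hbound ξ hξ η hη
    rw [abs_of_nonneg (le_trans hk₀.le this.1)]; exact this.2
  set kbar : ℝ → ℝ := fun ξ => ∫ η in I, k ξ η with hkbar
  have hvolr : (volume I).toReal = 1 := by rw [hvol]; simp
  have hkbar_lb : ∀ ξ ∈ I, k₀ ≤ kbar ξ := by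
    intro ξ hξ
    have : ∫ _η in I, k₀ ≤ ∫ η in I, k ξ η :=
      setIntegral_mono_on (integrableOn_const hvollt.ne) (hkint ξ hξ) hI
        (fun η hη => (hbound ξ hξ η hη).1)
    simpa [setIntegral_const, Measure.real, hvolr] using this
  have hkbar_ub : ∀ ξ ∈ I, kbar ξ ≤ k₁ := by
    intro ξ hξ
    have : ∫ η in I, k ξ η ≤ ∫ _η in I, k₁ :=
      setIntegral_mono_on (hkint ξ hξ) (integrableOn_const hvollt.ne) hI
        (fun η hη => (hbound ξ hξ η hη).2)
    simpa [setIntegral_const, Measure.real, hvolr] using this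
  have hkbar_pos : ∀ ξ ∈ I, 0 < kbar ξ := fun ξ hξ => lt_of_lt_of_le hk₀ (hkbar_lb ξ hξ)
  -- normalized kernel integrates to 1
  have hone : ∀ ξ ∈ I, ∫ η in I, k ξ η / kbar ξ = 1 := by
    intro ξ hξ
    rw [integral_div]
    exact div_self (hkbar_pos ξ hξ).ne'
  -- integrability of normalized weighted |φ|
  have hg_int : ∀ ξ ∈ I, IntegrableOn (fun η => (k ξ η / kbar ξ) * ‖φ η‖) I volume := by
    intro ξ hξ
    refine hint _ (((hkmeas ξ).div_const _).mul (hφm.norm))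
      ((k₁ / k₀) * C) fun η hη => ?_
    have h1 := hbound ξ hξ η hη
    have h2 := hkbar_pos ξ hξ
    have h3 := hkbar_lb ξ hξ
    have hC : 0 ≤ C := le_trans (norm_nonneg _) (hφb η hη)
    have hk : 0 ≤ k ξ η / kbar ξ := div_nonneg (le_trans hk₀.le h1.1) h2.le
    rw [abs_of_nonneg (mul_nonneg hk (norm_nonneg _))]
    have hkk : k ξ η / kbar ξ ≤ k₁ / k₀ :=
      div_le_div₀ (hk₀.le.trans hk01.le) h1.2 hk₀ h3
    exact mul_le_mul hkk (hφb η hη) (norm_nonneg _) (div_nonneg (hk₀.le.trans hk01.le) hk₀.le)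
  have hk_div_int : ∀ ξ ∈ I, IntegrableOn (fun η => k ξ η / kbar ξ) I volume := by
    intro ξ hξ
    refine hint _ ((hkmeas ξ).div_const _) (k₁ / k₀) fun η hη => ?_
    have h1 := hbound ξ hξ η hη
    have h3 := hkbar_lb ξ hξ
    rw [abs_of_nonneg (div_nonneg (hk₀.le.trans h1.1) (hkbar_pos ξ hξ).le)]
    exact div_le_div₀ (hk₀.le.trans hk01.le) h1.2 hk₀ h3
  -- key pointwise estimate
  have key : ∀ ξ ∈ I, ‖φ ξ‖ ≤ ∫ η in I, (k ξ η / kbar ξ) * ‖φ η‖ := by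
    intro ξ hξ
    have h1 : ‖φ ξ‖ ≤ ‖μ * φ ξ‖ := by
      rw [norm_mul]
      nlinarith [norm_nonneg (φ ξ), norm_nonneg μ]
    rw [heig ξ hξ] at h1
    refine h1.trans ?_
    have h2 : ‖∫ η in I, (↑(k ξ η / kbar ξ) : ℂ) * φ η‖
        ≤ ∫ η in I, ‖(↑(k ξ η / kbar ξ) : ℂ) * φ η‖ := by
      exact norm_integral_le_integral_norm _
    refine h2.trans (le_of_eq ?_)
    refine setIntegral_congr_fun hI fun η hη => ?_
    have hk : 0 ≤ k ξ η / kbar ξ :=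
      div_nonneg (hk₀.le.trans (hbound ξ hξ η hη).1) (hkbar_pos ξ hξ).le
    rw [norm_mul, Complex.norm_of_nonneg hk]
  -- bad sets are null
  have hAmeas : ∀ ε : ℝ, MeasurableSet (I ∩ {η | ‖φ η‖ ≤ M - ε}) :=
    fun ε => hI.inter ((hφm.norm) measurableSet_Iic)
  have hnull : ∀ ε : ℝ, 0 < ε → volume (I ∩ {η | ‖φ η‖ ≤ M - ε}) = 0 := by
    intro ε hε
    by_contra ha
    set A := I ∩ {η | ‖φ η‖ ≤ M - ε} with hA
    have hAsub : A ⊆ I := Set.inter_subset_left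
    have hAlt : volume A < ⊤ := lt_of_le_of_lt (measure_mono hAsub) hvollt
    set a := (volume A).toReal with hadef
    have hapos : 0 < a := ENNReal.toReal_pos ha hAlt.ne
    set δ := ε * (k₀ / k₁) * a with hδ
    have hδpos : 0 < δ := by
      apply mul_pos (mul_pos hε (div_pos hk₀ (hk₀.trans hk01))) hapos
    have hbound2 : ∀ ξ ∈ I, ‖φ ξ‖ ≤ M - δ := by
      intro ξ hξ
      refine (key ξ hξ).trans ?_
      have hsplit : (∫ η in I, (k ξ η / kbar ξ) * ‖φ η‖)
          = (∫ η in A, (k ξ η / kbar ξ) * ‖φ η‖)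
            + ∫ η in I \ A, (k ξ η / kbar ξ) * ‖φ η‖ := by
        rw [← setIntegral_union (Set.disjoint_sdiff_right) (hI.diff (hAmeas ε))
          ((hg_int ξ hξ).mono_set hAsub) ((hg_int ξ hξ).mono_set Set.diff_subset),
          Set.union_diff_cancel hAsub]
      have hsplit1 : (∫ η in I, k ξ η / kbar ξ)
          = (∫ η in A, k ξ η / kbar ξ) + ∫ η in I \ A, k ξ η / kbar ξ := by
        rw [← setIntegral_union (Set.disjoint_sdiff_right) (hI.diff (hAmeas ε))
          ((hk_div_int ξ hξ).mono_set hAsub) ((hk_div_int ξ hξ).mono_set Set.diff_subset),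
          Set.union_diff_cancel hAsub]
      have hIA : (∫ η in A, (k ξ η / kbar ξ) * ‖φ η‖)
          ≤ ∫ η in A, (k ξ η / kbar ξ) * (M - ε) := by
        refine setIntegral_mono_on ((hg_int ξ hξ).mono_set hAsub) ?_ (hAmeas ε) ?_
        · exact (((hk_div_int ξ hξ).mono_set hAsub).mul_const _)
        · intro η hη
          have hk : 0 ≤ k ξ η / kbar ξ :=
            div_nonneg (hk₀.le.trans (hbound ξ hξ η (hAsub hη)).1) (hkbar_pos ξ hξ).le
          exact mul_le_mul_of_nonneg_left hη.2 hk
      have hIrest : (∫ η in I \ A, (k ξ η / kbar ξ) * ‖φ η‖)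
          ≤ ∫ η in I \ A, (k ξ η / kbar ξ) * M := by
        refine setIntegral_mono_on ((hg_int ξ hξ).mono_set Set.diff_subset) ?_
          (hI.diff (hAmeas ε)) ?_
        · exact (((hk_div_int ξ hξ).mono_set Set.diff_subset).mul_const _)
        · intro η hη
          have hk : 0 ≤ k ξ η / kbar ξ :=
            div_nonneg (hk₀.le.trans (hbound ξ hξ η hη.1).1) (hkbar_pos ξ hξ).le
          exact mul_le_mul_of_nonneg_left (hle η hη.1) hk
      have hAint : (k₀ / k₁) * a ≤ ∫ η in A, k ξ η / kbar ξ := by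
        have : (∫ _η in A, (k₀ / k₁)) ≤ ∫ η in A, k ξ η / kbar ξ := by
          refine setIntegral_mono_on
            (integrableOn_const hAlt.ne) ((hk_div_int ξ hξ).mono_set hAsub)
            (hAmeas ε) fun η hη => ?_
          exact div_le_div₀ (hk₀.le.trans (hbound ξ hξ η (hAsub hη)).1)
            (hbound ξ hξ η (hAsub hη)).1 (hkbar_pos ξ hξ) (hkbar_ub ξ hξ)
        simpa [setIntegral_const, Measure.real, mul_comm] using this
      -- pull constants out
      simp only [integral_mul_const] at hIA hIrest
      rw [hone ξ hξ] at hsplit1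
      rw [hsplit]
      have hmul : ε * (k₀ / k₁ * a) ≤ ε * ∫ η in A, k ξ η / kbar ξ :=
        mul_le_mul_of_nonneg_left hAint hε.le
      have hMM : ((∫ η in A, k ξ η / kbar ξ) + ∫ η in I \ A, k ξ η / kbar ξ) * M = M := by
        rw [← hsplit1, one_mul]
      nlinarith [hmul, hMM]
    have : M ≤ M - δ := by
      refine csSup_le ⟨‖φ ξ₀‖, ⟨ξ₀, hξ₀, rfl⟩⟩ ?_
      rintro x ⟨ξ, hξ, rfl⟩; exact hbound2 ξ hξ
    linarith
  have hS : volume (⋃ n : ℕ, (I ∩ {η | ‖φ η‖ ≤ M - 1 / (n + 1)})) = 0 :=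
    measure_iUnion_null fun n => hnull _ (by positivity)
  have hS' : (volume.restrict I) (⋃ n : ℕ, (I ∩ {η | ‖φ η‖ ≤ M - 1 / (n + 1)})) = 0 :=
    le_antisymm (le_trans (Measure.restrict_apply_le _ _) hS.le) bot_le
  have hSae : ∀ᵐ η ∂(volume.restrict I),
      η ∉ ⋃ n : ℕ, (I ∩ {η | ‖φ η‖ ≤ M - 1 / (n + 1)}) :=
    measure_eq_zero_iff_ae_notMem.mp hS'
  filter_upwards [ae_restrict_mem hI, hSae] with η hη hηS
  refine le_antisymm (hle η hη) ?_
  by_contra h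
  push_neg at h
  obtain ⟨n, hn⟩ := exists_nat_one_div_lt (sub_pos.2 h)
  exact hηS (Set.mem_iUnion.2 ⟨n, hη, by simp only [Set.mem_setOf_eq]; linarith⟩)
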